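/- For every n ≥ 0, [x,y]^{2n+1} is not a product of two squares in the free group F₂ = ⟨x,y⟩ (theorem of Akhavan-Malayeri). -/

import Mathlib

/-- The free group on two generators. -/
abbrev F2 : Type := FreeGroup Bool

/-- The first generator. -/
def x : F2 := FreeGroup.of true
/-- The second generator. -/
def y : F2 := FreeGroup.of false

open scoped commutatorElement

/-- The discrete Heisenberg group, modeled on `ℤ × ℤ × ℤ`. -/
@[ext] structure Heis where
  a : ℤ
  b : ℤ
  c : ℤ

namespace Heis

instance : Mul Heis := ⟨fun p q => ⟨p.a + q.a, p.b + q.b, p.c + q.c + p.a * q.b⟩⟩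
instance : One Heis := ⟨⟨0, 0, 0⟩⟩
instance : Inv Heis := ⟨fun p => ⟨-p.a, -p.b, -p.c + p.a * p.b⟩⟩

@[simp] lemma mul_a (p q : Heis) : (p * q).a = p.a + q.a := rfl
@[simp] lemma mul_b (p q : Heis) : (p * q).b = p.b + q.b := rfl
@[simp] lemma mul_c (p q : Heis) : (p * q).c = p.c + q.c + p.a * q.b := rfl
@[simp] lemma one_a : (1 : Heis).a = 0 := rfl
@[simp] lemma one_b : (1 : Heis).b = 0 := rfl
@[simp] lemma one_c : (1 : Heis).c = 0 := rfl
@[simp] lemma inv_a (p : Heis) : p⁻¹.a = -p.a := rfl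
@[simp] lemma inv_b (p : Heis) : p⁻¹.b = -p.b := rfl
@[simp] lemma inv_c (p : Heis) : p⁻¹.c = -p.c + p.a * p.b := rfl

instance : Group Heis where
  mul_assoc p q r := by ext <;> simp <;> ring
  one_mul p := by ext <;> simp
  mul_one p := by ext <;> simp
  inv_mul_cancel p := by ext <;> simp <;> ring

/-- A central element `(0, 0, k)`. -/
def z (k : ℤ) : Heis := ⟨0, 0, k⟩

lemma z_pow (k : ℤ) : ∀ m : ℕ, (z k) ^ m = z (m * k)
  | 0 => by ext <;> simp [z]
  | m + 1 => by
    rw [pow_succ, z_pow k m]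
    ext <;> simp [z] <;> ring

end Heis

/-- The homomorphism `F₂ → Heis` sending `x ↦ (1,0,0)`, `y ↦ (0,1,0)`. -/
def f : F2 →* Heis := FreeGroup.lift (fun b => if b then ⟨1, 0, 0⟩ else ⟨0, 1, 0⟩)

lemma f_comm : f ⁅x, y⁆ = Heis.z 1 := by
  show f (x * y * x⁻¹ * y⁻¹) = Heis.z 1
  simp only [map_mul, map_inv, f, x, y, FreeGroup.lift_apply_of]
  ext <;> simp [Heis.z]

/-- For every `n ≥ 0`, `⁅x,y⁆^(2n+1)` is not a product of two squares in the free group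
on two generators (Akhavan-Malayeri). -/
theorem commutator_odd_pow_not_prod_two_squares (n : ℕ) :
    ¬ ∃ a b : F2, ⁅x, y⁆ ^ (2 * n + 1) = a ^ 2 * b ^ 2 := by
  rintro ⟨a, b, h⟩
  have h' : Heis.z ((2 * n + 1 : ℕ) * 1) = (f a) ^ 2 * (f b) ^ 2 := by
    rw [← Heis.z_pow, ← f_comm, ← map_pow, h, map_mul, map_pow, map_pow]
  set A := f a
  set B := f b
  have ha : (0 : ℤ) = A.a + A.a + (B.a + B.a) := by
    have := congrArg Heis.a h'
    simpa [Heis.z, pow_two] using this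
  have hb : (0 : ℤ) = A.b + A.b + (B.b + B.b) := by
    have := congrArg Heis.b h'
    simpa [Heis.z, pow_two] using this
  have hc : ((2 * n + 1 : ℕ) : ℤ) =
      (A.c + A.c + A.a * A.b) + (B.c + B.c + B.a * B.b) + (A.a + A.a) * (B.b + B.b) := by
    have := congrArg Heis.c h'
    simpa [Heis.z, pow_two] using this
  have hBa : B.a = -A.a := by omega
  have hBb : B.b = -A.b := by omega
  rw [hBa, hBb] at hc
  have : ((2 * n + 1 : ℕ) : ℤ) = 2 * (A.c + B.c - A.a * A.b) := by
    rw [hc]; ring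
  omega
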